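/- Let u, v : ℤ → {0,1} with u ≠ v, and suppose that for all integers p ≤ q the number of indices i with p ≤ i ≤ q and u(i) = 0 differs from the number of indices i with p ≤ i ≤ q and v(i) = 0 by at most 1. Then there exists a unique w : ℤ → {0,1} such that for every integer i: if u(i) ≠ v(i) then w(i) = u(i) and w(i+1) = v(i), and if u(i) = v(i) then w(i) = w(i+1). -/

import Mathlib

/-- Bi-infinite binary words are functions `ℤ → Bool`, where `false` stands for the
letter 0 and `true` for the letter 1.  `zeroCount u p q` is the number of indices
`i` with `p ≤ i ≤ q` and `u i = 0`, as an integer. -/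
noncomputable def zeroCount (u : ℤ → Bool) (p q : ℤ) : ℤ :=
  ((Finset.Icc p q).filter (fun i => u i = false)).card

private lemma zeroCount_sub_eq (u v : ℤ → Bool) (p q : ℤ) :
    zeroCount u p q - zeroCount v p q =
      ∑ k ∈ Finset.Icc p q,
        ((if u k = false then (1:ℤ) else 0) - (if v k = false then 1 else 0)) := by
  rw [Finset.sum_sub_distrib]
  unfold zeroCount
  rw [Finset.card_filter, Finset.card_filter]
  push_cast
  rfl

private lemma consist (u v : ℤ → Bool)
    (hd : ∀ p q : ℤ, p ≤ q → |zeroCount u p q - zeroCount v p q| ≤ 1)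
    (i j : ℤ) (hij : i < j) (hi : u i ≠ v i) (hj : u j ≠ v j)
    (hmid : ∀ k, i < k → k < j → u k = v k) : v i = u j := by
  have hsum := zeroCount_sub_eq u v i j
  have hsub : ({i, j} : Finset ℤ) ⊆ Finset.Icc i j := by
    intro x hx
    simp only [Finset.mem_insert, Finset.mem_singleton] at hx
    rcases hx with rfl | rfl <;> (rw [Finset.mem_Icc]; omega)
  have hzero : ∀ x ∈ Finset.Icc i j, x ∉ ({i, j} : Finset ℤ) →
      ((if u x = false then (1:ℤ) else 0) - (if v x = false then 1 else 0)) = 0 := by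
    intro x hx hnx
    simp only [Finset.mem_insert, Finset.mem_singleton, not_or] at hnx
    rw [Finset.mem_Icc] at hx
    rw [hmid x (lt_of_le_of_ne hx.1 (Ne.symm hnx.1)) (lt_of_le_of_ne hx.2 hnx.2), sub_self]
  have h2 := Finset.sum_subset hsub hzero
  have h3 := Finset.sum_pair (f := fun k =>
      ((if u k = false then (1:ℤ) else 0) - (if v k = false then 1 else 0))) hij.ne
  have h4 := hd i j hij.le
  rw [hsum, ← h2, h3] at h4
  cases hui : u i <;> cases hvi : v i <;> cases huj : u j <;> cases hvj : v j <;>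
    simp_all <;> omega

theorem existsUnique_replacement_coding (u v : ℤ → Bool) (hne : u ≠ v)
    (hd : ∀ p q : ℤ, p ≤ q → |zeroCount u p q - zeroCount v p q| ≤ 1) :
    ∃! w : ℤ → Bool, ∀ i : ℤ,
      (u i ≠ v i → w i = u i ∧ w (i + 1) = v i) ∧
      (u i = v i → w i = w (i + 1)) := by
  classical
  have hD : ∃ j, u j ≠ v j := by
    by_contra h
    push_neg at h
    exact hne (funext fun i => h i)
  obtain ⟨i0, hi0⟩ := hD
  set P : ℤ → Prop := fun i => ∃ j, i ≤ j ∧ u j ≠ v j with hP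
  have hl : ∀ i, P i → ∃ j, (i ≤ j ∧ u j ≠ v j) ∧ ∀ k, i ≤ k ∧ u k ≠ v k → j ≤ k := by
    intro i h
    exact Int.exists_least_of_bdd ⟨i, fun z hz => hz.1⟩ h
  have hg : ∃ g : ℤ, ∀ i, ¬ P i → u g ≠ v g ∧ ∀ k, u k ≠ v k → k ≤ g := by
    by_cases hbdd : ∃ b : ℤ, ∀ z, u z ≠ v z → z ≤ b
    · obtain ⟨g, hg1, hg2⟩ := Int.exists_greatest_of_bdd hbdd ⟨i0, hi0⟩
      exact ⟨g, fun i _ => ⟨hg1, hg2⟩⟩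
    · refine ⟨0, fun i hi => absurd ?_ hi⟩
      push_neg at hbdd
      obtain ⟨z, hz1, hz2⟩ := hbdd i
      exact ⟨z, hz2.le, hz1⟩
  obtain ⟨g, hgspec⟩ := hg
  set w : ℤ → Bool := fun i => if h : P i then u (hl i h).choose else v g with hwdef
  have h_at_diff : ∀ i, u i ≠ v i → w i = u i := by
    intro i hi
    have hPi : P i := ⟨i, le_refl i, hi⟩
    have hc := (hl i hPi).choose_spec
    have hj : (hl i hPi).choose = i := le_antisymm (hc.2 i ⟨le_refl i, hi⟩) hc.1.1
    rw [hwdef]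
    simp only [dif_pos hPi, hj]
  have h_next : ∀ i, u i ≠ v i → w (i + 1) = v i := by
    intro i hi
    by_cases hP1 : P (i + 1)
    · have hc := (hl (i+1) hP1).choose_spec
      have hij : i < (hl (i+1) hP1).choose := by
        have := hc.1.1; omega
      have hmid : ∀ k, i < k → k < (hl (i+1) hP1).choose → u k = v k := by
        intro k hk1 hk2
        by_contra hk
        have := hc.2 k ⟨by omega, hk⟩
        omega
      have hcons := consist u v hd i _ hij hi hc.1.2 hmid
      rw [hwdef]
      simp only [dif_pos hP1]
      exact hcons.symm
    · have hspec := hgspec (i+1) hP1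
      have hgi : g = i := by
        have h1 : i ≤ g := hspec.2 i hi
        have h2 : ¬ (i + 1 ≤ g) := fun h => hP1 ⟨g, h, hspec.1⟩
        omega
      rw [hwdef]
      simp only [dif_neg hP1, hgi]
  have h_eq : ∀ i, u i = v i → w i = w (i + 1) := by
    intro i hi
    by_cases hP1 : P (i + 1)
    · have hPi : P i := by
        obtain ⟨j, hj1, hj2⟩ := hP1
        exact ⟨j, by omega, hj2⟩
      have s1 := (hl i hPi).choose_spec
      have s2 := (hl (i+1) hP1).choose_spec
      have hne1 : (hl i hPi).choose ≠ i := fun h => (h ▸ s1.1.2) hi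
      have h1 : i + 1 ≤ (hl i hPi).choose := by
        have := s1.1.1; omega
      have e : (hl i hPi).choose = (hl (i+1) hP1).choose :=
        le_antisymm (s1.2 _ ⟨by have := s2.1.1; omega, s2.1.2⟩)
          (s2.2 _ ⟨h1, s1.1.2⟩)
      rw [hwdef]
      simp only [dif_pos hPi, dif_pos hP1, e]
    · have hPi : ¬ P i := by
        rintro ⟨j, hj1, hj2⟩
        have hji : j ≠ i := fun h => (h ▸ hj2) hi
        exact hP1 ⟨j, by omega, hj2⟩
      rw [hwdef]
      simp only [dif_neg hPi, dif_neg hP1]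
  have hwspec : ∀ i : ℤ,
      (u i ≠ v i → w i = u i ∧ w (i + 1) = v i) ∧
      (u i = v i → w i = w (i + 1)) :=
    fun i => ⟨fun h => ⟨h_at_diff i h, h_next i h⟩, h_eq i⟩
  refine ⟨w, hwspec, ?_⟩
  intro w' hw'
  have hstep : ∀ (x : ℤ → Bool), (∀ i : ℤ,
      (u i ≠ v i → x i = u i ∧ x (i + 1) = v i) ∧
      (u i = v i → x i = x (i + 1))) → ∀ k : ℤ,
      (x (k + 1) = if u k = v k then x k else v k) ∧
      (x k = if u k = v k then x (k + 1) else u k) := by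
    intro x hx k
    by_cases h : u k = v k
    · constructor <;> simp [if_pos h, (hx k).2 h]
    · obtain ⟨h1, h2⟩ := (hx k).1 h
      constructor <;> simp [if_neg h, h1, h2]
  have base : w' i0 = w i0 := by
    rw [((hw' i0).1 hi0).1, ((hwspec i0).1 hi0).1]
  have hfwd : ∀ n : ℕ, w' (i0 + n) = w (i0 + n) := by
    intro n
    induction n with
    | zero => simpa using base
    | succ n ih =>
      have e : i0 + ((n + 1 : ℕ) : ℤ) = (i0 + n) + 1 := by push_cast; ring
      rw [e, (hstep w' hw' _).1, (hstep w hwspec _).1, ih]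
  have hbwd : ∀ n : ℕ, w' (i0 - n) = w (i0 - n) := by
    intro n
    induction n with
    | zero => simpa using base
    | succ n ih =>
      have e : (i0 - ((n + 1 : ℕ) : ℤ)) + 1 = i0 - (n : ℕ) := by push_cast; ring
      have h1 := (hstep w' hw' (i0 - ((n + 1 : ℕ) : ℤ))).2
      have h2 := (hstep w hwspec (i0 - ((n + 1 : ℕ) : ℤ))).2
      rw [e] at h1 h2
      rw [h1, h2, ih]
  funext i
  rcases le_total i0 i with h | h
  · have hi : i = i0 + ((i - i0).toNat : ℤ) := by omega
    rw [hi]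
    exact hfwd _
  · have hi : i = i0 - ((i0 - i).toNat : ℤ) := by omega
    rw [hi]
    exact hbwd _
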